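/- Let (R, m, k) be a local Noetherian ring, I ⊆ m an ideal with I ⊇ mI, and suppose J ⊆ I with mI ⊆ J and J integral over mI. Let x_1, …, x_s ∈ I be elements whose images form a k-basis of I/J. Then the k-algebra homomorphism k[X_1, …, X_s] → R[IT]/(m·R[IT]) (into the fiber of the Rees algebra over the closed point) sending X_i to the class of x_i·T is a finite (module-finite) ring homomorphism. -/

import Mathlib

open IsLocalRing
open Polynomial

/-- Let `(R,m,k)` be a Noetherian local ring, `I ⊆ m` an ideal, `mI ⊆ J ⊆ I` with `J`
integral over `mI`, and let `x_1, …, x_s ∈ I` have images forming a `k`-basis of `I/J`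
(realized as `(I/J)⧸ m•⊤`).  Then the `k`-algebra homomorphism
`k[X_1,…,X_s] → R[IT]/(m·R[IT])` sending `X_i` to the class of `x_i·T` is finite. -/
lemma aux_monomial_mem_map {R : Type*} [CommRing R] (I K : Ideal R) (n : ℕ) :
    ∀ r ∈ K * I ^ n, ∃ w ∈ Ideal.map (algebraMap R (reesAlgebra I)) K,
      (w : R[X]) = Polynomial.monomial n r := by
  intro r hr
  refine Submodule.mul_induction_on hr ?_ ?_
  · intro a ha b hb
    refine ⟨algebraMap R (reesAlgebra I) a * ⟨monomial n b, reesAlgebra.monomial_mem.mpr hb⟩,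
      Ideal.mul_mem_right _ _ (Ideal.mem_map_of_mem _ ha), ?_⟩
    push_cast
    simp [Polynomial.C_mul_monomial]
  · rintro r1 r2 ⟨w1, hw1, e1⟩ ⟨w2, hw2, e2⟩
    exact ⟨w1 + w2, Ideal.add_mem _ hw1 hw2, by push_cast [e1, e2]; rw [map_add]⟩
      -- done


lemma aux_nilpotent {R : Type*} [CommRing R] [IsLocalRing R] (I J : Ideal R) (hJI : J ≤ I)
    (hint : ∀ f ∈ J, ∃ n : ℕ, 1 ≤ n ∧ ∃ a : ℕ → R,
      (∀ ν, 1 ≤ ν → ν ≤ n → a ν ∈ (maximalIdeal R * I) ^ ν) ∧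
      f ^ n + ∑ ν ∈ Finset.Icc 1 n, a ν * f ^ (n - ν) = 0)
    (j : R) (hj : j ∈ J) (h : (monomial 1 j : R[X]) ∈ reesAlgebra I) :
    ∃ n : ℕ, 1 ≤ n ∧ ((⟨monomial 1 j, h⟩ : reesAlgebra I) ^ n ∈
      Ideal.map (algebraMap R (reesAlgebra I)) (maximalIdeal R)) := by
  classical
  obtain ⟨n, hn, a, ha, he⟩ := hint j hj
  refine ⟨n, hn, ?_⟩
  have hmem : ∀ ν ∈ Finset.Icc 1 n, -(a ν * j ^ (n - ν)) ∈ maximalIdeal R * I ^ n := by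
    intro ν hν
    rw [Finset.mem_Icc] at hν
    refine neg_mem ?_
    have h1 : a ν ∈ maximalIdeal R * I ^ ν := by
      have h0 := ha ν hν.1 hν.2
      rw [mul_pow] at h0
      exact Ideal.mul_mono (Ideal.pow_le_self (by omega)) le_rfl h0
    have h2 : j ^ (n - ν) ∈ I ^ (n - ν) := Ideal.pow_mem_pow (hJI hj) _
    have h3 := Ideal.mul_mem_mul h1 h2
    rwa [mul_assoc, ← pow_add, Nat.add_sub_cancel' hν.2] at h3
  have H : ∀ ν ∈ Finset.Icc 1 n, ∃ w ∈ Ideal.map (algebraMap R (reesAlgebra I)) (maximalIdeal R),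
      (w : R[X]) = Polynomial.monomial n (-(a ν * j ^ (n - ν))) :=
    fun ν hν => aux_monomial_mem_map I (maximalIdeal R) n _ (hmem ν hν)
  choose! w hw hwval using H
  have key : (⟨monomial 1 j, h⟩ : reesAlgebra I) ^ n = ∑ ν ∈ Finset.Icc 1 n, w ν := by
    apply Subtype.ext
    push_cast
    rw [monomial_pow, one_mul]
    rw [Finset.sum_congr rfl (fun ν hν => hwval ν hν)]
    rw [← map_sum (monomial n)]
    congr 1
    have : j ^ n = -∑ ν ∈ Finset.Icc 1 n, a ν * j ^ (n - ν) := eq_neg_of_add_eq_zero_left he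
    rw [this, ← Finset.sum_neg_distrib]
  rw [key]
  exact Ideal.sum_mem _ fun ν hν => hw ν hν


lemma aux_decomp {R : Type*} [CommRing R] [IsLocalRing R] (I J : Ideal R)
    (hmJ : maximalIdeal R * I ≤ J) (hJI : J ≤ I)
    (s : ℕ) (x : Fin s → R) (hx : ∀ i, x i ∈ I)
    (b : Module.Basis (Fin s) (R ⧸ maximalIdeal R)
      (((↥I) ⧸ (Submodule.comap I.subtype J)) ⧸
        (maximalIdeal R • (⊤ : Submodule R ((↥I) ⧸ (Submodule.comap I.subtype J))))))
    (hb : ∀ i, b i = Submodule.Quotient.mk (Submodule.Quotient.mk ⟨x i, hx i⟩))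
    (y : R) (hy : y ∈ I) : ∃ c : Fin s → R, y - ∑ i, c i * x i ∈ J := by
  classical
  let v : ((↥I) ⧸ (Submodule.comap I.subtype J)) ⧸
      (maximalIdeal R • (⊤ : Submodule R ((↥I) ⧸ (Submodule.comap I.subtype J)))) :=
    Submodule.Quotient.mk (Submodule.Quotient.mk (⟨y, hy⟩ : I))
  choose c hc using fun i => Ideal.Quotient.mk_surjective (b.repr v i)
  refine ⟨c, ?_⟩
  set u : I := ⟨y, hy⟩ - ∑ i, c i • ⟨x i, hx i⟩ with hu
  have hz : (Submodule.Quotient.mk (Submodule.Quotient.mk u) :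
      ((↥I) ⧸ (Submodule.comap I.subtype J)) ⧸
        (maximalIdeal R • (⊤ : Submodule R ((↥I) ⧸ (Submodule.comap I.subtype J))))) = 0 := by
    have h1 : (Submodule.Quotient.mk (Submodule.Quotient.mk u) :
        ((↥I) ⧸ (Submodule.comap I.subtype J)) ⧸
          (maximalIdeal R • (⊤ : Submodule R ((↥I) ⧸ (Submodule.comap I.subtype J))))) =
        v - ∑ i, (b.repr v i) • b i := by
      rw [hu]
      simp only [← Submodule.mkQ_apply, map_sub, map_sum]
      congr 1
      refine Finset.sum_congr rfl fun i _ => ?_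
      rw [hb i, ← hc i]
      rfl
    rw [h1, Module.Basis.sum_repr, sub_self]
  have hz' : (Submodule.Quotient.mk u : (↥I) ⧸ (Submodule.comap I.subtype J)) ∈
      maximalIdeal R • (⊤ : Submodule R ((↥I) ⧸ (Submodule.comap I.subtype J))) :=
    (Submodule.Quotient.mk_eq_zero _).mp hz
  have h2 : (Submodule.Quotient.mk u : (↥I) ⧸ (Submodule.comap I.subtype J)) ∈
      Submodule.map (Submodule.comap I.subtype J).mkQ
        (maximalIdeal R • (⊤ : Submodule R I)) := by
    rwa [Submodule.map_smul'', Submodule.map_top, Submodule.range_mkQ]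
  obtain ⟨u', hu', e⟩ := h2
  have hdiff : u' - u ∈ Submodule.comap I.subtype J := by
    have h3 : (Submodule.Quotient.mk u' : (↥I) ⧸ (Submodule.comap I.subtype J)) =
        Submodule.Quotient.mk u := e
    exact (Submodule.Quotient.eq _).mp h3
  have hu'J : (u' : R) ∈ J := by
    have hval : (u' : R) ∈ Submodule.map I.subtype (maximalIdeal R • (⊤ : Submodule R I)) :=
      ⟨u', hu', rfl⟩
    rw [Submodule.map_smul'', Submodule.map_top, Submodule.range_subtype,
      Ideal.smul_eq_mul] at hval
    exact hmJ hval
  have huJ : (u : R) ∈ J := by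
    have h3 : ((u' - u : I) : R) ∈ J := hdiff
    have h4 : (u : R) = (u' : R) - ((u' - u : I) : R) := by push_cast; ring
    rw [h4]
    exact Ideal.sub_mem _ hu'J h3
  have h5 : (u : R) = y - ∑ i, c i * x i := by
    rw [hu]
    push_cast
    simp [smul_eq_mul]
  rwa [h5] at huJ


set_option maxHeartbeats 1000000 in
set_option synthInstance.maxHeartbeats 200000 in
theorem stmt_2 (R : Type*) [CommRing R] [IsNoetherianRing R] [IsLocalRing R]
    (I J : Ideal R) (hIm : I ≤ maximalIdeal R)
    (hmJ : maximalIdeal R * I ≤ J) (hJI : J ≤ I)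
    (hint : ∀ f ∈ J, ∃ n : ℕ, 1 ≤ n ∧ ∃ a : ℕ → R,
      (∀ ν, 1 ≤ ν → ν ≤ n → a ν ∈ (maximalIdeal R * I) ^ ν) ∧
      f ^ n + ∑ ν ∈ Finset.Icc 1 n, a ν * f ^ (n - ν) = 0)
    (s : ℕ) (x : Fin s → R) (hx : ∀ i, x i ∈ I)
    (b : Module.Basis (Fin s) (R ⧸ maximalIdeal R)
      (((↥I) ⧸ (Submodule.comap I.subtype J)) ⧸
        (maximalIdeal R • (⊤ : Submodule R ((↥I) ⧸ (Submodule.comap I.subtype J))))))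
    (hb : ∀ i, b i = Submodule.Quotient.mk (Submodule.Quotient.mk ⟨x i, hx i⟩)) :
    RingHom.Finite
      (MvPolynomial.eval₂Hom
        (Ideal.Quotient.lift (maximalIdeal R)
          ((Ideal.Quotient.mk
              (Ideal.map (algebraMap R (reesAlgebra I)) (maximalIdeal R))).comp
            (algebraMap R (reesAlgebra I)))
          (fun a ha => Ideal.Quotient.eq_zero_iff_mem.mpr
            (Ideal.mem_map_of_mem _ ha)))
        (fun i =>
          Ideal.Quotient.mk (Ideal.map (algebraMap R (reesAlgebra I)) (maximalIdeal R))
            ⟨Polynomial.monomial 1 (x i),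
              reesAlgebra.monomial_mem.mpr (by simpa using hx i)⟩)) := by
  classical
  set M : Ideal (reesAlgebra I) :=
    Ideal.map (algebraMap R (reesAlgebra I)) (maximalIdeal R) with hMdef
  set q : reesAlgebra I →+* reesAlgebra I ⧸ M := Ideal.Quotient.mk M with hqdef
  set ψ : (R ⧸ maximalIdeal R) →+* reesAlgebra I ⧸ M :=
    Ideal.Quotient.lift (maximalIdeal R) (q.comp (algebraMap R (reesAlgebra I)))
      (fun a ha => Ideal.Quotient.eq_zero_iff_mem.mpr (Ideal.mem_map_of_mem _ ha)) with hψdef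
  set g : Fin s → reesAlgebra I ⧸ M := fun i =>
    q ⟨Polynomial.monomial 1 (x i), reesAlgebra.monomial_mem.mpr (by simpa using hx i)⟩
    with hgdef
  set φ : MvPolynomial (Fin s) (R ⧸ maximalIdeal R) →+* reesAlgebra I ⧸ M :=
    MvPolynomial.eval₂Hom ψ g with hφdef
  show @RingHom.Finite (MvPolynomial (Fin s) (R ⧸ maximalIdeal R)) (reesAlgebra I ⧸ M) _ _ φ
  have hψmk : ∀ r : R, ψ (Ideal.Quotient.mk (maximalIdeal R) r) =
      q (algebraMap R (reesAlgebra I) r) := fun r => rfl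
  refine RingHom.IsIntegral.to_finite ?_ ?_
  · -- integrality
    set G : Set (reesAlgebra I ⧸ M) :=
      Set.range φ ∪ Set.range (fun p : J =>
        q ⟨Polynomial.monomial 1 (p : R),
          reesAlgebra.monomial_mem.mpr (by simpa using hJI p.2)⟩) with hGdef
    have hG : ∀ z ∈ G, φ.IsIntegralElem z := by
      rintro z (⟨p, rfl⟩ | ⟨p, rfl⟩)
      · exact φ.isIntegralElem_map
      · obtain ⟨n, hn, hpow⟩ := aux_nilpotent I J hJI hint p.1 p.2
          (reesAlgebra.monomial_mem.mpr (by simpa using hJI p.2))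
        refine ⟨Polynomial.X ^ n, Polynomial.monic_X_pow n, ?_⟩
        rw [Polynomial.eval₂_X_pow, ← map_pow]
        exact Ideal.Quotient.eq_zero_iff_mem.mpr hpow
    have hclo : ∀ z : reesAlgebra I ⧸ M, z ∈ Subring.closure G := by
      have key : ∀ p (hadj : p ∈ Algebra.adjoin R
          (Submodule.map (Polynomial.monomial 1 : R →ₗ[R] R[X]) I : Set R[X])),
          ∀ h : p ∈ reesAlgebra I, q ⟨p, h⟩ ∈ Subring.closure G := by
        intro p hadj
        induction hadj using Algebra.adjoin_induction with
        | mem p hp =>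
          intro h
          obtain ⟨y, hyI, rfl⟩ := hp
          obtain ⟨c, hc⟩ := aux_decomp I J hmJ hJI s x hx b hb y hyI
          have e : (⟨Polynomial.monomial 1 y, h⟩ : reesAlgebra I) =
              (∑ i, algebraMap R (reesAlgebra I) (c i) *
                ⟨Polynomial.monomial 1 (x i),
                  reesAlgebra.monomial_mem.mpr (by simpa using hx i)⟩) +
              ⟨Polynomial.monomial 1 (y - ∑ i, c i * x i),
                reesAlgebra.monomial_mem.mpr (by simpa using hJI hc)⟩ := by
            apply Subtype.ext
            push_cast
            rw [Finset.sum_congr rfl (fun i _ => ?_)]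
            · rw [← map_sum (Polynomial.monomial 1), ← map_add (Polynomial.monomial 1)]
              ring_nf
            · exact Polynomial.C_mul_monomial ..
          rw [e, map_add, map_sum]
          refine add_mem (sum_mem fun i _ => ?_) ?_
          · rw [map_mul]
            refine mul_mem ?_ ?_
            · refine Subring.subset_closure (Or.inl ⟨MvPolynomial.C
                (Ideal.Quotient.mk (maximalIdeal R) (c i)), ?_⟩)
              rw [hφdef, MvPolynomial.eval₂Hom_C]
              exact hψmk (c i)
            · refine Subring.subset_closure (Or.inl ⟨MvPolynomial.X i, ?_⟩)
              rw [hφdef, MvPolynomial.eval₂Hom_X']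
          · exact Subring.subset_closure (Or.inr ⟨⟨y - ∑ i, c i * x i, hc⟩, rfl⟩)
        | algebraMap r =>
          intro h
          have e : (⟨algebraMap R R[X] r, h⟩ : reesAlgebra I) =
              algebraMap R (reesAlgebra I) r := rfl
          rw [e, ← hψmk r]
          exact Subring.subset_closure (Or.inl ⟨MvPolynomial.C
            (Ideal.Quotient.mk (maximalIdeal R) r), by rw [hφdef, MvPolynomial.eval₂Hom_C]⟩)
        | add p1 p2 h1 h2 ih1 ih2 =>
          intro h
          have h1' : p1 ∈ reesAlgebra I := by
            rw [← adjoin_monomial_eq_reesAlgebra]; exact h1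
          have h2' : p2 ∈ reesAlgebra I := by
            rw [← adjoin_monomial_eq_reesAlgebra]; exact h2
          have e : (⟨p1 + p2, h⟩ : reesAlgebra I) = ⟨p1, h1'⟩ + ⟨p2, h2'⟩ := rfl
          rw [e, map_add]
          exact add_mem (ih1 h1') (ih2 h2')
        | mul p1 p2 h1 h2 ih1 ih2 =>
          intro h
          have h1' : p1 ∈ reesAlgebra I := by
            rw [← adjoin_monomial_eq_reesAlgebra]; exact h1
          have h2' : p2 ∈ reesAlgebra I := by
            rw [← adjoin_monomial_eq_reesAlgebra]; exact h2
          have e : (⟨p1 * p2, h⟩ : reesAlgebra I) = ⟨p1, h1'⟩ * ⟨p2, h2'⟩ := rfl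
          rw [e, map_mul]
          exact mul_mem (ih1 h1') (ih2 h2')
      intro z
      obtain ⟨w, rfl⟩ := Ideal.Quotient.mk_surjective z
      have := key w.1 (by rw [adjoin_monomial_eq_reesAlgebra]; exact w.2) w.2
      simpa using this
    exact fun z => IsIntegral.of_mem_closure'' G hG z (hclo z)
  · -- finite type
    have hAq : Algebra.FiniteType R (reesAlgebra I ⧸ M) :=
      Algebra.FiniteType.of_surjective (Ideal.Quotient.mkₐ R M)
        (Ideal.Quotient.mkₐ_surjective R M)
    have hcomp : @RingHom.FiniteType R (reesAlgebra I ⧸ M) _ _ (q.comp (algebraMap R (reesAlgebra I))) := by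
      have e : @RingHom.toAlgebra R (reesAlgebra I ⧸ M) _ _ (q.comp (algebraMap R (reesAlgebra I))) =
          (inferInstance : Algebra R (reesAlgebra I ⧸ M)) :=
        Algebra.algebra_ext _ _ fun r => rfl
      show @Algebra.FiniteType R _ _ _ (@RingHom.toAlgebra R (reesAlgebra I ⧸ M) _ _ (q.comp (algebraMap R (reesAlgebra I))))
      rw [e]
      exact hAq
    have hψft : @RingHom.FiniteType (R ⧸ maximalIdeal R) (reesAlgebra I ⧸ M) _ _ ψ := by
      refine RingHom.FiniteType.of_comp_finiteType
        (f := Ideal.Quotient.mk (maximalIdeal R)) ?_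
      have e : ψ.comp (Ideal.Quotient.mk (maximalIdeal R)) =
          q.comp (algebraMap R (reesAlgebra I)) := by
        ext r
        exact hψmk r
      rwa [e]
    refine RingHom.FiniteType.of_comp_finiteType (f := MvPolynomial.C) ?_
    rwa [hφdef, MvPolynomial.eval₂Hom_comp_C]
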